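/- For generalized k = 3 Mandelstam invariants 𝔰_{abc} on 6 labels satisfying Σ_{J ∋ a} 𝔰_J = 0 for each a ∈ {1,...,6} (sum over 3-element subsets containing a) and 𝔰_J = 0 if J has a repeated index, the invariant R̃ := 𝔰_{156}+𝔰_{256}+𝔰_{345}+𝔰_{346}+𝔰_{356}+𝔰_{456} equals the planar basis element η_{246} := (1/6)(6𝔰_{123}+5𝔰_{124}+4𝔰_{125}+3𝔰_{126}+4𝔰_{134}+3𝔰_{135}+2𝔰_{136}+2𝔰_{145}+𝔰_{146}+6𝔰_{156}+3𝔰_{234}+2𝔰_{235}+𝔰_{236}+𝔰_{245}+5𝔰_{256}+6𝔰_{345}+5𝔰_{346}+4𝔰_{356}+3𝔰_{456}). -/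

import Mathlib

/-- For generalized `k = 3` Mandelstam invariants on 6 labels (modelled as a
function `S` on 3-element subsets of `Fin 6`; labels `1,…,6` correspond to
`0,…,5`), satisfying the generalized momentum conservation
`∑_{J ∋ a} S J = 0` for each label `a`, the invariant
`R̃ = 𝔰₁₅₆ + 𝔰₂₅₆ + 𝔰₃₄₅ + 𝔰₃₄₆ + 𝔰₃₅₆ + 𝔰₄₅₆` equals the planar basis element
`η₂₄₆` given by the explicit rational linear combination below. -/
theorem Rtilde_eq_eta246
    (S : Finset (Fin 6) → ℂ)
    (hmom : ∀ a : Fin 6,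
      ∑ J ∈ Finset.univ.filter (fun J : Finset (Fin 6) => J.card = 3 ∧ a ∈ J), S J = 0) :
    S {0, 4, 5} + S {1, 4, 5} + S {2, 3, 4} + S {2, 3, 5} + S {2, 4, 5} + S {3, 4, 5}
      = (1/6 : ℂ) *
        (6 * S {0, 1, 2} + 5 * S {0, 1, 3} + 4 * S {0, 1, 4} + 3 * S {0, 1, 5}
          + 4 * S {0, 2, 3} + 3 * S {0, 2, 4} + 2 * S {0, 2, 5} + 2 * S {0, 3, 4}
          + S {0, 3, 5} + 6 * S {0, 4, 5} + 3 * S {1, 2, 3} + 2 * S {1, 2, 4}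
          + S {1, 2, 5} + S {1, 3, 4} + 5 * S {1, 4, 5} + 6 * S {2, 3, 4}
          + 5 * S {2, 3, 5} + 4 * S {2, 4, 5} + 3 * S {3, 4, 5}) := by
  have h0 : S {0, 1, 2} + S {0, 1, 3} + S {0, 1, 4} + S {0, 1, 5} + S {0, 2, 3} + S {0, 2, 4} + S {0, 2, 5} + S {0, 3, 4} + S {0, 3, 5} + S {0, 4, 5} = 0 := by
    have h := hmom 0
    rw [show Finset.univ.filter (fun J : Finset (Fin 6) => J.card = 3 ∧ (0:Fin 6) ∈ J)
        = [({0, 1, 2} : Finset (Fin 6)),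
          ({0, 1, 3} : Finset (Fin 6)),
          ({0, 1, 4} : Finset (Fin 6)),
          ({0, 1, 5} : Finset (Fin 6)),
          ({0, 2, 3} : Finset (Fin 6)),
          ({0, 2, 4} : Finset (Fin 6)),
          ({0, 2, 5} : Finset (Fin 6)),
          ({0, 3, 4} : Finset (Fin 6)),
          ({0, 3, 5} : Finset (Fin 6)),
          ({0, 4, 5} : Finset (Fin 6))].toFinset from by decide] at h
    rw [List.sum_toFinset _ (by decide)] at h
    simpa [add_assoc] using h
  have h1 : S {0, 1, 2} + S {0, 1, 3} + S {0, 1, 4} + S {0, 1, 5} + S {1, 2, 3} + S {1, 2, 4} + S {1, 2, 5} + S {1, 3, 4} + S {1, 3, 5} + S {1, 4, 5} = 0 := by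
    have h := hmom 1
    rw [show Finset.univ.filter (fun J : Finset (Fin 6) => J.card = 3 ∧ (1:Fin 6) ∈ J)
        = [({0, 1, 2} : Finset (Fin 6)),
          ({0, 1, 3} : Finset (Fin 6)),
          ({0, 1, 4} : Finset (Fin 6)),
          ({0, 1, 5} : Finset (Fin 6)),
          ({1, 2, 3} : Finset (Fin 6)),
          ({1, 2, 4} : Finset (Fin 6)),
          ({1, 2, 5} : Finset (Fin 6)),
          ({1, 3, 4} : Finset (Fin 6)),
          ({1, 3, 5} : Finset (Fin 6)),
          ({1, 4, 5} : Finset (Fin 6))].toFinset from by decide] at h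
    rw [List.sum_toFinset _ (by decide)] at h
    simpa [add_assoc] using h
  have h2 : S {0, 1, 2} + S {0, 2, 3} + S {0, 2, 4} + S {0, 2, 5} + S {1, 2, 3} + S {1, 2, 4} + S {1, 2, 5} + S {2, 3, 4} + S {2, 3, 5} + S {2, 4, 5} = 0 := by
    have h := hmom 2
    rw [show Finset.univ.filter (fun J : Finset (Fin 6) => J.card = 3 ∧ (2:Fin 6) ∈ J)
        = [({0, 1, 2} : Finset (Fin 6)),
          ({0, 2, 3} : Finset (Fin 6)),
          ({0, 2, 4} : Finset (Fin 6)),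
          ({0, 2, 5} : Finset (Fin 6)),
          ({1, 2, 3} : Finset (Fin 6)),
          ({1, 2, 4} : Finset (Fin 6)),
          ({1, 2, 5} : Finset (Fin 6)),
          ({2, 3, 4} : Finset (Fin 6)),
          ({2, 3, 5} : Finset (Fin 6)),
          ({2, 4, 5} : Finset (Fin 6))].toFinset from by decide] at h
    rw [List.sum_toFinset _ (by decide)] at h
    simpa [add_assoc] using h
  have h3 : S {0, 1, 3} + S {0, 2, 3} + S {0, 3, 4} + S {0, 3, 5} + S {1, 2, 3} + S {1, 3, 4} + S {1, 3, 5} + S {2, 3, 4} + S {2, 3, 5} + S {3, 4, 5} = 0 := by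
    have h := hmom 3
    rw [show Finset.univ.filter (fun J : Finset (Fin 6) => J.card = 3 ∧ (3:Fin 6) ∈ J)
        = [({0, 1, 3} : Finset (Fin 6)),
          ({0, 2, 3} : Finset (Fin 6)),
          ({0, 3, 4} : Finset (Fin 6)),
          ({0, 3, 5} : Finset (Fin 6)),
          ({1, 2, 3} : Finset (Fin 6)),
          ({1, 3, 4} : Finset (Fin 6)),
          ({1, 3, 5} : Finset (Fin 6)),
          ({2, 3, 4} : Finset (Fin 6)),
          ({2, 3, 5} : Finset (Fin 6)),
          ({3, 4, 5} : Finset (Fin 6))].toFinset from by decide] at h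
    rw [List.sum_toFinset _ (by decide)] at h
    simpa [add_assoc] using h
  have h4 : S {0, 1, 4} + S {0, 2, 4} + S {0, 3, 4} + S {0, 4, 5} + S {1, 2, 4} + S {1, 3, 4} + S {1, 4, 5} + S {2, 3, 4} + S {2, 4, 5} + S {3, 4, 5} = 0 := by
    have h := hmom 4
    rw [show Finset.univ.filter (fun J : Finset (Fin 6) => J.card = 3 ∧ (4:Fin 6) ∈ J)
        = [({0, 1, 4} : Finset (Fin 6)),
          ({0, 2, 4} : Finset (Fin 6)),
          ({0, 3, 4} : Finset (Fin 6)),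
          ({0, 4, 5} : Finset (Fin 6)),
          ({1, 2, 4} : Finset (Fin 6)),
          ({1, 3, 4} : Finset (Fin 6)),
          ({1, 4, 5} : Finset (Fin 6)),
          ({2, 3, 4} : Finset (Fin 6)),
          ({2, 4, 5} : Finset (Fin 6)),
          ({3, 4, 5} : Finset (Fin 6))].toFinset from by decide] at h
    rw [List.sum_toFinset _ (by decide)] at h
    simpa [add_assoc] using h
  have h5 : S {0, 1, 5} + S {0, 2, 5} + S {0, 3, 5} + S {0, 4, 5} + S {1, 2, 5} + S {1, 3, 5} + S {1, 4, 5} + S {2, 3, 5} + S {2, 4, 5} + S {3, 4, 5} = 0 := by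
    have h := hmom 5
    rw [show Finset.univ.filter (fun J : Finset (Fin 6) => J.card = 3 ∧ (5:Fin 6) ∈ J)
        = [({0, 1, 5} : Finset (Fin 6)),
          ({0, 2, 5} : Finset (Fin 6)),
          ({0, 3, 5} : Finset (Fin 6)),
          ({0, 4, 5} : Finset (Fin 6)),
          ({1, 2, 5} : Finset (Fin 6)),
          ({1, 3, 5} : Finset (Fin 6)),
          ({1, 4, 5} : Finset (Fin 6)),
          ({2, 3, 5} : Finset (Fin 6)),
          ({2, 4, 5} : Finset (Fin 6)),
          ({3, 4, 5} : Finset (Fin 6))].toFinset from by decide] at h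
    rw [List.sum_toFinset _ (by decide)] at h
    simpa [add_assoc] using h
  linear_combination (-1/2 : ℂ) * h0 + (-1/3 : ℂ) * h1 + (-1/6 : ℂ) * h2 + (1/6 : ℂ) * h4 + (1/3 : ℂ) * h5
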